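/- arXiv:2304.12224 — 10 statements merged into one kernel-verified Lean document; each statement's English description precedes it below -/
import Mathlib

section
/- Suppose qᵀDv ≤ √ω ‖v‖_A ‖q‖_C holds for all vectors v ∈ ℝ^{n_u} and q ∈ ℝ^{n_p} if and only if the symmetric matrix ω·C − D·A⁻¹·Dᵀ is positive semidefinite (i.e., D A⁻¹ Dᵀ ≼ ω C in the Loewner order). -/
open Matrix

/-- The `M`-weighted norm `‖x‖_M = √(xᵀ M x)`. -/
noncomputable def mnorm {n : ℕ} (M : Matrix (Fin n) (Fin n) ℝ) (x : Fin n → ℝ) : ℝ :=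
  Real.sqrt (x ⬝ᵥ M.mulVec x)

/-- Cauchy–Schwarz for the dot product on `Fin n → ℝ`. -/
lemma dot_cs {n : ℕ} (x y : Fin n → ℝ) :
    x ⬝ᵥ y ≤ Real.sqrt (x ⬝ᵥ x) * Real.sqrt (y ⬝ᵥ y) := by
  have h := Finset.sum_mul_sq_le_sq_mul_sq Finset.univ x y
  have hxy : (x ⬝ᵥ y) ^ 2 ≤ (x ⬝ᵥ x) * (y ⬝ᵥ y) := by
    simpa [dotProduct, sq] using h
  calc x ⬝ᵥ y ≤ |x ⬝ᵥ y| := le_abs_self _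
    _ = Real.sqrt ((x ⬝ᵥ y) ^ 2) := (Real.sqrt_sq_eq_abs _).symm
    _ ≤ Real.sqrt ((x ⬝ᵥ x) * (y ⬝ᵥ y)) := Real.sqrt_le_sqrt hxy
    _ = Real.sqrt (x ⬝ᵥ x) * Real.sqrt (y ⬝ᵥ y) :=
        Real.sqrt_mul (Finset.sum_nonneg fun i _ => mul_self_nonneg (x i)) _

open scoped MatrixOrder in
/-- Weighted Cauchy–Schwarz for a positive semidefinite matrix. -/
lemma weighted_cs {n : ℕ} {M : Matrix (Fin n) (Fin n) ℝ} (hM : M.PosSemidef)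
    (x y : Fin n → ℝ) :
    x ⬝ᵥ M.mulVec y ≤ Real.sqrt (x ⬝ᵥ M.mulVec x) * Real.sqrt (y ⬝ᵥ M.mulVec y) := by
  classical
  set B := CFC.sqrt M with hB
  have hB2 : B * B = M := CFC.sqrt_mul_sqrt_self M hM.nonneg
  have hBsym : Bᵀ = B := by
    have := (CFC.sqrt_nonneg M).posSemidef.1
    rwa [Matrix.IsHermitian, Matrix.conjTranspose_eq_transpose_of_trivial] at this
  have key : ∀ a b : Fin n → ℝ, a ⬝ᵥ M.mulVec b = (B.mulVec a) ⬝ᵥ (B.mulVec b) := by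
    intro a b
    rw [← hB2, ← Matrix.mulVec_mulVec, Matrix.dotProduct_mulVec]
    congr 1
    rw [← hBsym, Matrix.vecMul_transpose, hBsym]
  rw [key x y, key x x, key y y]
  exact dot_cs _ _

theorem stmt_0 {nu np : ℕ} (hnu : 0 < nu) (hnp : 0 < np)
    (A : Matrix (Fin nu) (Fin nu) ℝ) (C : Matrix (Fin np) (Fin np) ℝ)
    (D : Matrix (Fin np) (Fin nu) ℝ) (ω : ℝ) (hω : 0 < ω)
    (hA : A.PosDef) (hC : C.PosDef) :
    (∀ (v : Fin nu → ℝ) (q : Fin np → ℝ),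
        q ⬝ᵥ D.mulVec v ≤ Real.sqrt ω * mnorm A v * mnorm C q) ↔
      (ω • C - D * A⁻¹ * Dᵀ).PosSemidef := by
  classical
  have hAdet : IsUnit A.det := isUnit_iff_ne_zero.mpr hA.det_pos.ne'
  have hAinv : (A⁻¹).PosDef := hA.inv
  set S := D * A⁻¹ * Dᵀ with hS
  have hDtq : ∀ q : Fin np → ℝ, ∀ v : Fin nu → ℝ,
      q ⬝ᵥ D.mulVec v = (Dᵀ.mulVec q) ⬝ᵥ v := by
    intro q v
    rw [Matrix.dotProduct_mulVec]
    congr 1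
    rw [← Matrix.transpose_transpose D, Matrix.vecMul_transpose, Matrix.transpose_transpose]
  -- the inverse cancels
  have hAw : ∀ q : Fin np → ℝ,
      A.mulVec (A⁻¹.mulVec (Dᵀ.mulVec q)) = Dᵀ.mulVec q := by
    intro q
    rw [Matrix.mulVec_mulVec, Matrix.mul_nonsing_inv A hAdet, Matrix.one_mulVec]
  -- q ⬝ᵥ S q  equals  w ⬝ᵥ A w  with  w = A⁻¹ Dᵀ q
  have hSq : ∀ q : Fin np → ℝ,
      q ⬝ᵥ S.mulVec q
        = (A⁻¹.mulVec (Dᵀ.mulVec q)) ⬝ᵥ A.mulVec (A⁻¹.mulVec (Dᵀ.mulVec q)) := by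
    intro q
    set w := A⁻¹.mulVec (Dᵀ.mulVec q) with hw
    have h1 : S.mulVec q = D.mulVec w := by
      rw [hS, ← Matrix.mulVec_mulVec, ← Matrix.mulVec_mulVec, hw]
    rw [h1, hDtq q w, hAw q, dotProduct_comm]
  -- q ⬝ᵥ D w also equals q ⬝ᵥ S q
  have hDw : ∀ q : Fin np → ℝ,
      q ⬝ᵥ D.mulVec (A⁻¹.mulVec (Dᵀ.mulVec q)) = q ⬝ᵥ S.mulVec q := by
    intro q
    rw [hSq q, hDtq, hAw, dotProduct_comm]
  -- value of the quadratic form of the difference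
  have hdiff : ∀ q : Fin np → ℝ,
      q ⬝ᵥ (ω • C - S).mulVec q = ω * (q ⬝ᵥ C.mulVec q) - q ⬝ᵥ S.mulVec q := by
    intro q
    rw [Matrix.sub_mulVec, dotProduct_sub, Matrix.smul_mulVec,
      dotProduct_smul, smul_eq_mul]
  have hs_nonneg : ∀ q : Fin np → ℝ, 0 ≤ q ⬝ᵥ S.mulVec q := by
    intro q
    rw [hSq q]
    simpa using hA.posSemidef.dotProduct_mulVec_nonneg (A⁻¹.mulVec (Dᵀ.mulVec q))
  constructor
  · intro h
    have hSpsd : S.PosSemidef := by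
      have := hAinv.posSemidef.mul_mul_conjTranspose_same D
      rwa [Matrix.conjTranspose_eq_transpose_of_trivial] at this
    have hherm : (ω • C - S).IsHermitian := by
      refine Matrix.IsHermitian.sub ?_ hSpsd.1
      have hCsym : Cᵀ = C := by
        have := hC.posSemidef.1
        rwa [Matrix.IsHermitian, Matrix.conjTranspose_eq_transpose_of_trivial] at this
      simp [Matrix.IsHermitian, hCsym]
    refine Matrix.PosSemidef.of_dotProduct_mulVec_nonneg hherm fun q => ?_
    have hstar : star q = q := rfl
    rw [hstar, hdiff q, sub_nonneg]
    set s := q ⬝ᵥ S.mulVec q with hsdef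
    set c := q ⬝ᵥ C.mulVec q with hcdef
    have hc0 : 0 ≤ c := by simpa using hC.posSemidef.dotProduct_mulVec_nonneg q
    have hs0 : 0 ≤ s := hs_nonneg q
    set w := A⁻¹.mulVec (Dᵀ.mulVec q) with hw
    have hkey := h w q
    rw [hDw q] at hkey
    have hmA : mnorm A w = Real.sqrt s := by rw [mnorm, ← hSq q]
    have hmC : mnorm C q = Real.sqrt c := rfl
    rw [hmA, hmC] at hkey
    -- s ≤ √ω √s √c  implies  s ≤ ω c
    rcases eq_or_lt_of_le hs0 with h0 | hpos
    · rw [← h0]; positivity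
    · have hss : Real.sqrt s * Real.sqrt s = s := Real.mul_self_sqrt hs0
      have hsspos : 0 < Real.sqrt s := Real.sqrt_pos.mpr hpos
      have h1 : Real.sqrt s ≤ Real.sqrt ω * Real.sqrt c := by
        nlinarith [hkey, hss, hsspos]
      have h2 : s ≤ (Real.sqrt ω * Real.sqrt c) * (Real.sqrt ω * Real.sqrt c) := by
        nlinarith [hss, hsspos.le, Real.sqrt_nonneg ω, Real.sqrt_nonneg c]
      calc s ≤ (Real.sqrt ω * Real.sqrt c) * (Real.sqrt ω * Real.sqrt c) := h2
        _ = (Real.sqrt ω * Real.sqrt ω) * (Real.sqrt c * Real.sqrt c) := by ring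
        _ = ω * c := by rw [Real.mul_self_sqrt hω.le, Real.mul_self_sqrt hc0]
  · intro hpsd v q
    set w := A⁻¹.mulVec (Dᵀ.mulVec q) with hw
    have hAsym : Aᵀ = A := by
      have := hA.posSemidef.1
      rwa [Matrix.IsHermitian, Matrix.conjTranspose_eq_transpose_of_trivial] at this
    have h1 : w ᵥ* A = Dᵀ.mulVec q := by
      rw [show w ᵥ* A = w ᵥ* Aᵀ by rw [hAsym], Matrix.vecMul_transpose, hw, hAw]
    have hqDv : q ⬝ᵥ D.mulVec v = w ⬝ᵥ A.mulVec v := by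
      rw [hDtq q v, ← h1, ← Matrix.dotProduct_mulVec]
    have hcs := weighted_cs hA.posSemidef w v
    have hsc : q ⬝ᵥ S.mulVec q ≤ ω * (q ⬝ᵥ C.mulVec q) := by
      have := hpsd.dotProduct_mulVec_nonneg q
      have hstar : star q = q := rfl
      rw [hstar, hdiff q, sub_nonneg] at this
      exact this
    have hbound : Real.sqrt (w ⬝ᵥ A.mulVec w) ≤ Real.sqrt ω * mnorm C q := by
      rw [← hSq q]
      calc Real.sqrt (q ⬝ᵥ S.mulVec q) ≤ Real.sqrt (ω * (q ⬝ᵥ C.mulVec q)) :=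
            Real.sqrt_le_sqrt hsc
        _ = Real.sqrt ω * mnorm C q := Real.sqrt_mul hω.le _
    calc q ⬝ᵥ D.mulVec v = w ⬝ᵥ A.mulVec v := hqDv
      _ ≤ Real.sqrt (w ⬝ᵥ A.mulVec w) * Real.sqrt (v ⬝ᵥ A.mulVec v) := hcs
      _ ≤ (Real.sqrt ω * mnorm C q) * mnorm A v := by
          exact mul_le_mul hbound le_rfl (Real.sqrt_nonneg _)
            (mul_nonneg (Real.sqrt_nonneg _) (Real.sqrt_nonneg _))
      _ = Real.sqrt ω * mnorm A v * mnorm C q := by ring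
end

section
/- If qᵀDv ≤ √ω ‖v‖_A ‖q‖_C for all v ∈ ℝ^{n_u} and q ∈ ℝ^{n_p}, then the matrix C⁻¹ D A⁻¹ Dᵀ satisfies the operator-norm bound ‖C⁻¹ D A⁻¹ Dᵀ x‖_C ≤ ω ‖x‖_C for every x ∈ ℝ^{n_p}; in particular the spectral radius of C⁻¹ D A⁻¹ Dᵀ is at most ω. -/
open Matrix

lemma mnorm_nonneg {n : ℕ} (M : Matrix (Fin n) (Fin n) ℝ) (x : Fin n → ℝ) : 0 ≤ mnorm M x :=
  Real.sqrt_nonneg _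
lemma quad_nonneg {n : ℕ} {M : Matrix (Fin n) (Fin n) ℝ} (hM : M.PosSemidef) (x : Fin n → ℝ) :
    0 ≤ x ⬝ᵥ M.mulVec x := by have := hM.dotProduct_mulVec_nonneg x; simpa using this
lemma mnorm_sq {n : ℕ} {M : Matrix (Fin n) (Fin n) ℝ} (hM : M.PosSemidef) (x : Fin n → ℝ) :
    mnorm M x * mnorm M x = x ⬝ᵥ M.mulVec x :=
  Real.mul_self_sqrt (quad_nonneg hM x)

lemma quad_pos {n : ℕ} {M : Matrix (Fin n) (Fin n) ℝ} (hM : M.PosDef) {x : Fin n → ℝ}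
    (hx : x ≠ 0) : 0 < x ⬝ᵥ M.mulVec x := by have := hM.dotProduct_mulVec_pos hx; simpa using this

lemma dot_symm {n : ℕ} {M : Matrix (Fin n) (Fin n) ℝ} (hM : M.IsHermitian)
    (x y : Fin n → ℝ) : x ⬝ᵥ M.mulVec y = y ⬝ᵥ M.mulVec x := by
  have hMt : Mᵀ = M := by
    have := hM; rwa [Matrix.IsHermitian, conjTranspose_eq_transpose_of_trivial] at this
  rw [Matrix.dotProduct_mulVec, ← Matrix.mulVec_transpose, hMt, dotProduct_comm]

lemma part1 {nu np : ℕ}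
    (A : Matrix (Fin nu) (Fin nu) ℝ) (C : Matrix (Fin np) (Fin np) ℝ)
    (D : Matrix (Fin np) (Fin nu) ℝ) (ω : ℝ) (hω : 0 < ω)
    (hA : A.PosDef) (hC : C.PosDef)
    (hcoup : ∀ (v : Fin nu → ℝ) (q : Fin np → ℝ),
      q ⬝ᵥ D.mulVec v ≤ Real.sqrt ω * mnorm A v * mnorm C q) :
    ∀ x : Fin np → ℝ,
        mnorm C ((C⁻¹ * D * A⁻¹ * Dᵀ).mulVec x) ≤ ω * mnorm C x := by
  intro x
  have hAu : IsUnit A.det := hA.det_pos.ne'.isUnit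
  have hCu : IsUnit C.det := hC.det_pos.ne'.isUnit
  set y : Fin nu → ℝ := A⁻¹.mulVec (Dᵀ.mulVec x) with hy
  set z : Fin np → ℝ := (C⁻¹ * D * A⁻¹ * Dᵀ).mulVec x with hz
  have hzy : z = C⁻¹.mulVec (D.mulVec y) := by
    simp [hz, hy, ← Matrix.mulVec_mulVec]
  -- A *ᵥ y = Dᵀ *ᵥ x
  have hAy : A.mulVec y = Dᵀ.mulVec x := by
    rw [hy, Matrix.mulVec_mulVec, Matrix.mul_nonsing_inv A hAu, Matrix.one_mulVec]
  have hCz : C.mulVec z = D.mulVec y := by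
    rw [hzy, Matrix.mulVec_mulVec, Matrix.mul_nonsing_inv C hCu, Matrix.one_mulVec]
  set s : ℝ := x ⬝ᵥ D.mulVec y with hs
  have hyAy : y ⬝ᵥ A.mulVec y = s := by
    rw [hAy, Matrix.mulVec_transpose, hs, Matrix.dotProduct_mulVec, dotProduct_comm]
  have hs0 : 0 ≤ s := hyAy ▸ (by have := hA.posSemidef.dotProduct_mulVec_nonneg y; simpa using this)
  have hmAy : mnorm A y = Real.sqrt s := by rw [mnorm, hyAy]
  have h1 : s ≤ Real.sqrt ω * Real.sqrt s * mnorm C x := by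
    have := hcoup y x; rwa [hmAy, ← hs] at this
  have h2 : mnorm C z * mnorm C z ≤ Real.sqrt ω * Real.sqrt s * mnorm C z := by
    have h := hcoup y z
    rw [hmAy] at h
    calc mnorm C z * mnorm C z = z ⬝ᵥ C.mulVec z := mnorm_sq hC.posSemidef z
    _ = z ⬝ᵥ D.mulVec y := by rw [hCz]
    _ ≤ _ := h
  -- now pure arithmetic
  set m := mnorm C z with hm
  set c := mnorm C x with hc
  set t := Real.sqrt s with ht
  set w := Real.sqrt ω with hw
  have hm0 : 0 ≤ m := mnorm_nonneg _ _
  have hc0 : 0 ≤ c := mnorm_nonneg _ _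
  have ht0 : 0 ≤ t := Real.sqrt_nonneg _
  have hw0 : 0 ≤ w := Real.sqrt_nonneg _
  have hww : w * w = ω := Real.mul_self_sqrt hω.le
  have htt : t * t = s := Real.mul_self_sqrt hs0
  rcases eq_or_lt_of_le hm0 with hme | hmp
  · rw [← hme]; positivity
  · have hmwt : m ≤ w * t := le_of_mul_le_mul_right h2 hmp
    rcases eq_or_lt_of_le ht0 with hte | htp
    · have : m ≤ 0 := by rw [← hte] at hmwt; simpa using hmwt
      linarith [mul_nonneg hω.le hc0]
    · have htwc : t ≤ w * c := by
        have h1' : t * t ≤ w * t * c := by rw [htt]; linarith [h1]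
        nlinarith
      calc m ≤ w * t := hmwt
      _ ≤ w * (w * c) := by nlinarith
      _ = ω * c := by rw [← mul_assoc, hww]

lemma quad_comb {n : ℕ} {C : Matrix (Fin n) (Fin n) ℝ} (hC : C.IsHermitian)
    (r s : ℝ) (a b : Fin n → ℝ) :
    (r • a + s • b) ⬝ᵥ C.mulVec (r • a + s • b) =
      r * r * (a ⬝ᵥ C.mulVec a) + 2 * r * s * (a ⬝ᵥ C.mulVec b) + s * s * (b ⬝ᵥ C.mulVec b) := by
  rw [Matrix.mulVec_add, Matrix.mulVec_smul, Matrix.mulVec_smul]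
  simp only [add_dotProduct, dotProduct_add, smul_dotProduct, dotProduct_smul, smul_eq_mul]
  rw [dot_symm hC b a]
  ring

lemma part2 {np : ℕ}
    (M : Matrix (Fin np) (Fin np) ℝ) (C : Matrix (Fin np) (Fin np) ℝ) (ω : ℝ) (hω : 0 < ω)
    (hC : C.PosDef)
    (hb : ∀ x : Fin np → ℝ, mnorm C (M.mulVec x) ≤ ω * mnorm C x) :
    ∀ μ ∈ spectrum ℂ (M.map (algebraMap ℝ ℂ)), ‖μ‖ ≤ ω := by
  intro μ hμ
  rw [spectrum.mem_iff, Matrix.isUnit_iff_isUnit_det, isUnit_iff_ne_zero, not_ne_iff] at hμ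
  obtain ⟨u, hu0, huz⟩ := Matrix.exists_mulVec_eq_zero_iff.mpr hμ
  have heig : (M.map (algebraMap ℝ ℂ)).mulVec u = μ • u := by
    rw [Matrix.sub_mulVec] at huz
    have h1 : (algebraMap ℂ (Matrix (Fin np) (Fin np) ℂ)) μ *ᵥ u = μ • u := by
      rw [Algebra.algebraMap_eq_smul_one, Matrix.smul_mulVec, Matrix.one_mulVec]
    have := sub_eq_zero.mp huz
    rw [h1] at this
    exact this.symm
  set a : Fin np → ℝ := fun i => (u i).re with ha'
  set b : Fin np → ℝ := fun i => (u i).im with hb'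
  have comp : ∀ i, (∑ j, ((M i j : ℂ) * u j)) = μ * u i := by
    intro i
    have := congrFun heig i
    simpa [Matrix.mulVec, dotProduct, Matrix.map_apply] using this
  have hre : M.mulVec a = μ.re • a + (-μ.im) • b := by
    funext i
    have := congrArg Complex.re (comp i)
    simp only [Complex.re_sum, Complex.mul_re, Complex.ofReal_re, Complex.ofReal_im,
      zero_mul, sub_zero] at this
    simp only [Matrix.mulVec, dotProduct, Pi.add_apply, Pi.smul_apply, smul_eq_mul]
    linarith [this]
  have him : M.mulVec b = μ.im • a + μ.re • b := by
    funext i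
    have := congrArg Complex.im (comp i)
    simp only [Complex.im_sum, Complex.mul_im, Complex.ofReal_re, Complex.ofReal_im,
      zero_mul, add_zero] at this
    simp only [Matrix.mulVec, dotProduct, Pi.add_apply, Pi.smul_apply, smul_eq_mul]
    linarith [this]
  set α := a ⬝ᵥ C.mulVec a with hα
  set β := b ⬝ᵥ C.mulVec b with hβ
  set γ := a ⬝ᵥ C.mulVec b with hγ
  have expand_a : (M.mulVec a) ⬝ᵥ C.mulVec (M.mulVec a) =
      μ.re * μ.re * α + 2 * μ.re * (-μ.im) * γ + μ.im * μ.im * β := by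
    rw [hre, quad_comb hC.isHermitian, ← hα, ← hβ, ← hγ]; ring_nf
  have expand_b : (M.mulVec b) ⬝ᵥ C.mulVec (M.mulVec b) =
      μ.im * μ.im * α + 2 * μ.im * μ.re * γ + μ.re * μ.re * β := by
    rw [him, quad_comb hC.isHermitian]
  have bnd_a : (M.mulVec a) ⬝ᵥ C.mulVec (M.mulVec a) ≤ ω * ω * α := by
    have h := mul_le_mul (hb a) (hb a) (mnorm_nonneg _ _)
      (mul_nonneg hω.le (mnorm_nonneg _ _))
    rw [mnorm_sq hC.posSemidef] at h
    calc _ ≤ ω * mnorm C a * (ω * mnorm C a) := h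
    _ = ω * ω * (mnorm C a * mnorm C a) := by ring
    _ = ω * ω * α := by rw [mnorm_sq hC.posSemidef]
  have bnd_b : (M.mulVec b) ⬝ᵥ C.mulVec (M.mulVec b) ≤ ω * ω * β := by
    have h := mul_le_mul (hb b) (hb b) (mnorm_nonneg _ _)
      (mul_nonneg hω.le (mnorm_nonneg _ _))
    rw [mnorm_sq hC.posSemidef] at h
    calc _ ≤ ω * mnorm C b * (ω * mnorm C b) := h
    _ = ω * ω * (mnorm C b * mnorm C b) := by ring
    _ = ω * ω * β := by rw [mnorm_sq hC.posSemidef]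
  have key : (μ.re * μ.re + μ.im * μ.im) * (α + β) ≤ ω * ω * (α + β) := by
    have := add_le_add bnd_a bnd_b
    rw [expand_a, expand_b] at this
    nlinarith [this]
  have hpos : 0 < α + β := by
    have hab : a ≠ 0 ∨ b ≠ 0 := by
      by_contra h
      push_neg at h
      apply hu0
      funext i
      have h1 := congrFun h.1 i
      have h2 := congrFun h.2 i
      simp only [ha', hb', Pi.zero_apply] at h1 h2
      exact Complex.ext h1 h2
    rcases hab with h | h
    · have := quad_pos hC h
      have := quad_nonneg hC.posSemidef b
      simp only [← hα, ← hβ] at *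
      linarith
    · have := quad_pos hC h
      have := quad_nonneg hC.posSemidef a
      simp only [← hα, ← hβ] at *
      linarith
  have hsq : μ.re * μ.re + μ.im * μ.im ≤ ω * ω :=
    le_of_mul_le_mul_right (by linarith [key]) hpos
  have hnorm : ‖μ‖ * ‖μ‖ = μ.re * μ.re + μ.im * μ.im := by
    rw [← Complex.normSq_apply, ← Complex.sq_norm, sq]
  nlinarith [norm_nonneg μ, hsq, hnorm]

theorem stmt_1 {nu np : ℕ} (hnu : 0 < nu) (hnp : 0 < np)
    (A : Matrix (Fin nu) (Fin nu) ℝ) (C : Matrix (Fin np) (Fin np) ℝ)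
    (D : Matrix (Fin np) (Fin nu) ℝ) (ω : ℝ) (hω : 0 < ω)
    (hA : A.PosDef) (hC : C.PosDef)
    (hcoup : ∀ (v : Fin nu → ℝ) (q : Fin np → ℝ),
      q ⬝ᵥ D.mulVec v ≤ Real.sqrt ω * mnorm A v * mnorm C q) :
    (∀ x : Fin np → ℝ,
        mnorm C ((C⁻¹ * D * A⁻¹ * Dᵀ).mulVec x) ≤ ω * mnorm C x) ∧
    (∀ μ ∈ spectrum ℂ ((C⁻¹ * D * A⁻¹ * Dᵀ).map (algebraMap ℝ ℂ)), ‖μ‖ ≤ ω) := by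
  have h1 := part1 A C D ω hω hA hC hcoup
  exact ⟨h1, part2 _ C ω hω hC h1⟩
end

section
/- Every eigenvalue μ of the matrix C_τ⁻¹ D A⁻¹ Dᵀ is real and satisfies 0 ≤ μ ≤ ω, provided qᵀDv ≤ √ω ‖v‖_A ‖q‖_C holds for all v ∈ ℝ^{n_u} and q ∈ ℝ^{n_p}. -/
open Matrix
open scoped ComplexOrder

private lemma psd_map {n : ℕ} {R : Matrix (Fin n) (Fin n) ℝ} (h : R.PosSemidef) :
    (R.map (algebraMap ℝ ℂ)).PosSemidef := by
  obtain ⟨L, rfl⟩ : ∃ L : Matrix (Fin n) (Fin n) ℝ, R = Lᴴ * L := by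
    open scoped MatrixOrder in exact CStarAlgebra.nonneg_iff_eq_star_mul_self.mp h.nonneg
  have hmap : (Lᴴ * L).map (algebraMap ℝ ℂ)
      = (L.map (algebraMap ℝ ℂ))ᴴ * (L.map (algebraMap ℝ ℂ)) := by
    rw [Matrix.map_mul]
    congr 1
    ext i j
    simp [Matrix.conjTranspose_apply, Matrix.map_apply]
  rw [hmap]
  exact Matrix.posSemidef_conjTranspose_mul_self _

theorem stmt_2 {nu np : ℕ} (hnu : 0 < nu) (hnp : 0 < np)
    (A : Matrix (Fin nu) (Fin nu) ℝ)
    (B C : Matrix (Fin np) (Fin np) ℝ)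
    (D : Matrix (Fin np) (Fin nu) ℝ) (τ ω : ℝ) (hτ : 0 < τ) (hω : 0 < ω)
    (hA : A.PosDef) (hB : B.PosDef) (hC : C.PosDef)
    (hcoup : ∀ (v : Fin nu → ℝ) (q : Fin np → ℝ),
      q ⬝ᵥ D.mulVec v ≤ Real.sqrt ω * mnorm A v * mnorm C q) :
    ∀ μ ∈ spectrum ℂ (((C + τ • B)⁻¹ * D * A⁻¹ * Dᵀ).map (algebraMap ℝ ℂ)),
      μ.im = 0 ∧ 0 ≤ μ.re ∧ μ.re ≤ ω := by
  intro μ hμ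
  set φ : ℝ →+* ℂ := algebraMap ℝ ℂ with hφ
  set M : Matrix (Fin np) (Fin np) ℝ := C + τ • B with hMdef
  have hτB : (τ • B).PosSemidef := by
    refine Matrix.PosSemidef.of_dotProduct_mulVec_nonneg ?_ fun x => ?_
    · rw [Matrix.IsHermitian, Matrix.conjTranspose_smul, star_trivial, hB.isHermitian.eq]
    · rw [Matrix.smul_mulVec, dotProduct_smul, smul_eq_mul]
      exact mul_nonneg hτ.le (by simpa using hB.posSemidef.dotProduct_mulVec_nonneg x)
  have hMpd : M.PosDef := hC.add_posSemidef hτB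
  set S : Matrix (Fin np) (Fin np) ℝ := D * A⁻¹ * Dᵀ with hSdef
  have hDT : (Dᵀ)ᴴ = D := by
    ext i j; simp [Matrix.conjTranspose_apply]
  have hSpsd : S.PosSemidef := by
    have h := (hA.inv.posSemidef).conjTranspose_mul_mul_same Dᵀ
    rwa [hDT] at h
  -- real key inequality: ∀ q, q ⬝ S q ≤ ω * q ⬝ M q
  have hkeyR : ∀ q : Fin np → ℝ, q ⬝ᵥ S *ᵥ q ≤ ω * (q ⬝ᵥ M *ᵥ q) := by
    intro q
    set u : Fin nu → ℝ := Dᵀ *ᵥ q with hu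
    set v : Fin nu → ℝ := A⁻¹ *ᵥ u with hv
    have hAv : A *ᵥ v = u := by
      rw [hv, Matrix.mulVec_mulVec, Matrix.mul_nonsing_inv _ hA.det_pos.ne'.isUnit,
        Matrix.one_mulVec]
    have hSq : S *ᵥ q = D *ᵥ v := by
      rw [hSdef, hv, hu, ← Matrix.mulVec_mulVec, ← Matrix.mulVec_mulVec]
    set s : ℝ := q ⬝ᵥ S *ᵥ q with hs
    set c : ℝ := q ⬝ᵥ C *ᵥ q with hc
    have hs_eq : s = q ⬝ᵥ D *ᵥ v := by rw [hs, hSq]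
    have hvAv : v ⬝ᵥ A *ᵥ v = s := by
      rw [hAv, hs_eq, hu, Matrix.dotProduct_mulVec, Matrix.vecMul_transpose,
        dotProduct_comm]
    have hs0 : 0 ≤ s := by simpa using hSpsd.dotProduct_mulVec_nonneg q
    have hc0 : 0 ≤ c := by simpa using hC.posSemidef.dotProduct_mulVec_nonneg q
    have hcoup' := hcoup v q
    rw [← hs_eq] at hcoup'
    have hmA : mnorm A v = Real.sqrt s := by rw [mnorm, hvAv]
    rw [hmA] at hcoup'
    have hsc : s ≤ ω * c := by
      have h1 : Real.sqrt s ^ 2 = s := Real.sq_sqrt hs0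
      have h2 : Real.sqrt c ^ 2 = c := Real.sq_sqrt hc0
      have h3 : Real.sqrt ω ^ 2 = ω := Real.sq_sqrt hω.le
      have h4 : mnorm C q = Real.sqrt c := by rw [mnorm, hc]
      rw [h4] at hcoup'
      nlinarith [Real.sqrt_nonneg s, Real.sqrt_nonneg c, Real.sqrt_nonneg ω,
        sq_nonneg (Real.sqrt s - Real.sqrt ω * Real.sqrt c)]
    have hqB : 0 ≤ q ⬝ᵥ B *ᵥ q := by simpa using hB.posSemidef.dotProduct_mulVec_nonneg q
    have hqM : q ⬝ᵥ M *ᵥ q = c + τ * (q ⬝ᵥ B *ᵥ q) := by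
      rw [hMdef, Matrix.add_mulVec, dotProduct_add, Matrix.smul_mulVec,
        dotProduct_smul, smul_eq_mul, hc]
    rw [hqM]
    nlinarith [mul_nonneg (mul_nonneg hω.le hτ.le) hqB]
  have hWpsd : (ω • M - S).PosSemidef := by
    have hωM : (ω • M).IsHermitian := by
      rw [Matrix.IsHermitian, Matrix.conjTranspose_smul, star_trivial, hMpd.isHermitian.eq]
    refine Matrix.PosSemidef.of_dotProduct_mulVec_nonneg (hωM.sub hSpsd.isHermitian) fun q => ?_
    have := hkeyR q
    simp only [Matrix.sub_mulVec, Matrix.smul_mulVec, dotProduct_sub,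
      dotProduct_smul, smul_eq_mul, star_trivial]
    linarith
  -- complex side
  set Mc := M.map φ with hMc
  set Sc := S.map φ with hSc
  -- get eigenvector
  rw [spectrum.mem_iff] at hμ
  rw [Matrix.isUnit_iff_isUnit_det, isUnit_iff_ne_zero, not_not] at hμ
  obtain ⟨v, hv0, hveq⟩ := Matrix.exists_mulVec_eq_zero_iff.mpr hμ
  have hTv : ((M⁻¹ * D * A⁻¹ * Dᵀ).map φ) *ᵥ v = μ • v := by
    have h1 := hveq
    rw [Matrix.sub_mulVec] at h1
    have h2 : (algebraMap ℂ (Matrix (Fin np) (Fin np) ℂ)) μ *ᵥ v = μ • v := by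
      rw [Algebra.algebraMap_eq_smul_one, Matrix.smul_mulVec, Matrix.one_mulVec]
    rw [h2, sub_eq_zero] at h1
    exact h1.symm
  have hMT : M * (M⁻¹ * D * A⁻¹ * Dᵀ) = S := by
    rw [hSdef, ← Matrix.mul_assoc, ← Matrix.mul_assoc, ← Matrix.mul_assoc,
      Matrix.mul_nonsing_inv _ hMpd.det_pos.ne'.isUnit, Matrix.one_mul]
  have hSv : Sc *ᵥ v = μ • (Mc *ᵥ v) := by
    have : Mc *ᵥ (((M⁻¹ * D * A⁻¹ * Dᵀ).map φ) *ᵥ v) = Sc *ᵥ v := by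
      rw [Matrix.mulVec_mulVec, hMc, hSc, ← Matrix.map_mul, hMT]
    rw [hTv, Matrix.mulVec_smul] at this
    exact this.symm
  set α : ℂ := star v ⬝ᵥ Mc *ᵥ v with hα
  set β : ℂ := star v ⬝ᵥ Sc *ᵥ v with hβ
  have hβα : β = μ * α := by
    rw [hβ, hSv, dotProduct_smul, hα, smul_eq_mul]
  have hMcpsd : Mc.PosSemidef := psd_map hMpd.posSemidef
  have hScpsd : Sc.PosSemidef := psd_map hSpsd
  have hα0 : 0 ≤ α := hMcpsd.dotProduct_mulVec_nonneg v
  have hβ0 : 0 ≤ β := hScpsd.dotProduct_mulVec_nonneg v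
  have hαne : α ≠ 0 := by
    intro h
    have hMv : Mc *ᵥ v = 0 := (hMcpsd.dotProduct_mulVec_zero_iff v).mp h
    have hdet : Mc.det ≠ 0 := by
      have hd : Mc.det = (M.det : ℂ) := by
        rw [hMc, ← RingHom.mapMatrix_apply, ← RingHom.map_det]
        rfl
      rw [hd]
      exact_mod_cast hMpd.det_pos.ne'
    have hinj := Matrix.mulVec_injective_iff_isUnit.mpr
      ((Matrix.isUnit_iff_isUnit_det Mc).mpr (isUnit_iff_ne_zero.mpr hdet))
    exact hv0 (hinj (by simpa using hMv))
  -- the upper bound inequality over ℂ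
  have hWc : ((ω • M - S).map φ) = (ω : ℂ) • Mc - Sc := by
    ext i j
    simp [hMc, hSc, Matrix.map_apply, Matrix.sub_apply, Matrix.smul_apply, smul_eq_mul, hφ]
  have hub : 0 ≤ (ω : ℂ) * α - β := by
    have := (psd_map hWpsd).dotProduct_mulVec_nonneg v
    rw [hWc, Matrix.sub_mulVec, Matrix.smul_mulVec, dotProduct_sub,
      dotProduct_smul, smul_eq_mul, ← hα, ← hβ] at this
    exact this
  -- extract real/imaginary data
  rw [Complex.le_def] at hα0 hβ0 hub
  have hαim : α.im = 0 := hα0.2.symm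
  have hαre : 0 < α.re := by
    rcases lt_or_eq_of_le hα0.1 with h | h
    · simpa using h
    · exfalso; exact hαne (Complex.ext (by simpa using h.symm) hαim)
  have hβim : β.im = 0 := hβ0.2.symm
  have hβre : 0 ≤ β.re := by simpa using hβ0.1
  have hubre : β.re ≤ ω * α.re := by
    have h := hub.1
    simp only [Complex.sub_re, Complex.mul_re, Complex.ofReal_re, Complex.ofReal_im,
      Complex.zero_re, hαim] at h
    linarith
  have hmul_im : μ.im * α.re = 0 := by
    have := congrArg Complex.im hβα
    simp only [Complex.mul_im, hαim, hβim, mul_zero, add_zero] at this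
    linarith
  have hμim : μ.im = 0 := by
    rcases mul_eq_zero.mp hmul_im with h | h
    · exact h
    · exact absurd h hαre.ne'
  have hmul_re : β.re = μ.re * α.re := by
    have := congrArg Complex.re hβα
    simp only [Complex.mul_re, hαim, hμim, mul_zero, sub_zero] at this
    linarith
  refine ⟨hμim, ?_, ?_⟩
  · have h1 : 0 * α.re ≤ μ.re * α.re := by rw [zero_mul, ← hmul_re]; exact hβre
    exact le_of_mul_le_mul_right h1 hαre
  · have h2 : μ.re * α.re ≤ ω * α.re := by rw [← hmul_re]; exact hubre
    exact le_of_mul_le_mul_right h2 hαre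
end

section
/- Let γ ∈ (0,1] and define the block matrices M := (1/γ)·[[A, 0],[D, C_τ]] and N := [[0, Dᵀ],[0, 0]] + ((1−γ)/γ)·[[A, 0],[D, C_τ]]. If qᵀDv ≤ √ω ‖v‖_A ‖q‖_C for all v, q, then the spectral radius of M⁻¹N satisfies ρ(M⁻¹N) ≤ max{1−γ, γω−(1−γ)}. -/
open Matrix

lemma map_smul_c {m n : Type*} (r : ℝ) (M : Matrix m n ℝ) :
    (r • M).map (algebraMap ℝ ℂ) = (r : ℂ) • M.map (algebraMap ℝ ℂ) := by
  ext i j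
  simp [Matrix.map_apply]

lemma quad_map_eq {n : ℕ} (A : Matrix (Fin n) (Fin n) ℝ) (hA : Aᵀ = A) (x : Fin n → ℂ) :
    star x ⬝ᵥ (A.map (algebraMap ℝ ℂ)) *ᵥ x =
      (((fun i => (x i).re) ⬝ᵥ A *ᵥ (fun i => (x i).re) +
        (fun i => (x i).im) ⬝ᵥ A *ᵥ (fun i => (x i).im) : ℝ) : ℂ) := by
  classical
  set f := algebraMap ℝ ℂ with hf
  set a : Fin n → ℝ := fun i => (x i).re with ha'
  set b : Fin n → ℝ := fun i => (x i).im with hb'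
  have hx : x = (f ∘ a) + Complex.I • (f ∘ b) := by
    funext i
    simp [f, a, b, Complex.ext_iff]
  have hs : star x = (f ∘ a) - Complex.I • (f ∘ b) := by
    funext i
    simp [f, a, b, Complex.ext_iff]
  have hAt : (A.map f)ᵀ = A.map f := by rw [← Matrix.transpose_map, hA]
  have hvm : (f ∘ b) ᵥ* (A.map f) = (A.map f) *ᵥ (f ∘ b) := by
    conv_lhs => rw [← hAt]
    rw [Matrix.vecMul_transpose]
  have cross : (f ∘ b) ⬝ᵥ (A.map f) *ᵥ (f ∘ a) = (f ∘ a) ⬝ᵥ (A.map f) *ᵥ (f ∘ b) := by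
    rw [Matrix.dotProduct_mulVec, hvm, dotProduct_comm]
  have hmv : ∀ w : Fin n → ℝ, (A.map f) *ᵥ (f ∘ w) = f ∘ (A *ᵥ w) := by
    intro w; funext i; exact (RingHom.map_mulVec f A w i).symm
  have hda : (f ∘ a) ⬝ᵥ (A.map f) *ᵥ (f ∘ a) = ((a ⬝ᵥ A *ᵥ a : ℝ) : ℂ) := by
    rw [hmv, ← RingHom.map_dotProduct]; rfl
  have hdb : (f ∘ b) ⬝ᵥ (A.map f) *ᵥ (f ∘ b) = ((b ⬝ᵥ A *ᵥ b : ℝ) : ℂ) := by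
    rw [hmv, ← RingHom.map_dotProduct]; rfl
  rw [hs]
  nth_rewrite 1 [hx]
  rw [Matrix.mulVec_add, Matrix.mulVec_smul]
  simp only [sub_dotProduct, dotProduct_add, dotProduct_smul, smul_dotProduct, smul_eq_mul]
  rw [cross, hda, hdb]
  push_cast
  linear_combination (-((b ⬝ᵥ A *ᵥ b : ℝ) : ℂ)) * Complex.I_mul_I

lemma herm_real {n : ℕ} {A : Matrix (Fin n) (Fin n) ℝ} (hA : A.IsHermitian) : Aᵀ = A := by
  ext i j
  have := congrFun (congrFun hA i) j
  simpa using this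

lemma quad_pos_s3 {n : ℕ} {A : Matrix (Fin n) (Fin n) ℝ} (hA : A.PosDef) {x : Fin n → ℂ}
    (hx : x ≠ 0) :
    ∃ r : ℝ, 0 < r ∧ star x ⬝ᵥ (A.map (algebraMap ℝ ℂ)) *ᵥ x = (r : ℂ) := by
  classical
  set a : Fin n → ℝ := fun i => (x i).re with ha'
  set b : Fin n → ℝ := fun i => (x i).im with hb'
  refine ⟨a ⬝ᵥ A *ᵥ a + b ⬝ᵥ A *ᵥ b, ?_, quad_map_eq A (herm_real hA.1) x⟩
  have hab : a ≠ 0 ∨ b ≠ 0 := by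
    by_contra h
    push_neg at h
    apply hx
    funext i
    have h1 := congrFun h.1 i
    have h2 := congrFun h.2 i
    simp only [a, b, Pi.zero_apply] at h1 h2
    exact Complex.ext h1 h2
  have hsa : ∀ w : Fin n → ℝ, 0 ≤ w ⬝ᵥ A *ᵥ w := by
    intro w
    have := hA.posSemidef.dotProduct_mulVec_nonneg w
    simpa using this
  rcases hab with h | h
  · have := hA.dotProduct_mulVec_pos h
    simp only [star_trivial] at this
    have := hsa b
    nlinarith [hA.dotProduct_mulVec_pos h, hsa b, (by simpa using hA.dotProduct_mulVec_pos h : (0:ℝ) < a ⬝ᵥ A *ᵥ a)]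
  · nlinarith [hsa a, (by simpa using hA.dotProduct_mulVec_pos h : (0:ℝ) < b ⬝ᵥ A *ᵥ b)]

lemma quad_nonneg_s3 {n : ℕ} {A : Matrix (Fin n) (Fin n) ℝ} (hA : A.PosDef) (x : Fin n → ℂ) :
    ∃ r : ℝ, 0 ≤ r ∧ star x ⬝ᵥ (A.map (algebraMap ℝ ℂ)) *ᵥ x = (r : ℂ) := by
  refine ⟨_, ?_, quad_map_eq A (herm_real hA.1) x⟩
  have hsa : ∀ w : Fin n → ℝ, 0 ≤ w ⬝ᵥ A *ᵥ w := by
    intro w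
    have := hA.posSemidef.dotProduct_mulVec_nonneg w
    simpa using this
  have := hsa fun i => (x i).re
  have := hsa fun i => (x i).im
  linarith

lemma quad_zero {n : ℕ} {A : Matrix (Fin n) (Fin n) ℝ} (hA : A.PosDef) {x : Fin n → ℂ}
    (h : star x ⬝ᵥ (A.map (algebraMap ℝ ℂ)) *ᵥ x = 0) : x = 0 := by
  by_contra hx
  obtain ⟨r, hr, he⟩ := quad_pos_s3 hA hx
  rw [he] at h
  exact absurd (by exact_mod_cast h) hr.ne'


lemma arith_bound {om al be de r g : ℝ} (hω : 0 < om) (hγ0 : 0 < g) (hγ1 : g ≤ 1)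
    (hα : 0 < al) (hδ0 : 0 ≤ de) (hδβ : de ≤ be) (hkeyR : r * al = -be) (hrneg : r < 0)
    (hcoup1 : be ≤ Real.sqrt om * Real.sqrt al * Real.sqrt de) :
    |g * r + (1 - g)| ≤ max (1 - g) (g * om - (1 - g)) := by
  have h5 : 0 < -(r * al) := by
    rw [← neg_mul]
    exact mul_pos (neg_pos.mpr hrneg) hα
  have hβpos : 0 < be := by linarith
  have h1 : Real.sqrt de ≤ Real.sqrt be := Real.sqrt_le_sqrt hδβ
  have h2 : be ≤ Real.sqrt om * Real.sqrt al * Real.sqrt be := by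
    calc be ≤ Real.sqrt om * Real.sqrt al * Real.sqrt de := hcoup1
      _ ≤ Real.sqrt om * Real.sqrt al * Real.sqrt be := by
          apply mul_le_mul_of_nonneg_left h1
          positivity
  have h3 : Real.sqrt be * Real.sqrt be ≤ (Real.sqrt om * Real.sqrt al) * Real.sqrt be := by
    rw [Real.mul_self_sqrt hβpos.le]
    exact h2
  have h4 : Real.sqrt be ≤ Real.sqrt om * Real.sqrt al :=
    le_of_mul_le_mul_right h3 (Real.sqrt_pos.mpr hβpos)
  have hβωα : be ≤ om * al := by
    nlinarith [Real.mul_self_sqrt hβpos.le, Real.mul_self_sqrt hω.le,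
      Real.mul_self_sqrt hα.le, Real.sqrt_nonneg be, Real.sqrt_nonneg om, Real.sqrt_nonneg al]
  have hrω : -om ≤ r := by nlinarith
  have hr0 : r ≤ 0 := hrneg.le
  rcases abs_cases (g * r + (1 - g)) with ⟨he, _⟩ | ⟨he, _⟩
  · rw [he]
    refine le_trans ?_ (le_max_left _ _)
    nlinarith
  · rw [he]
    refine le_trans ?_ (le_max_right _ _)
    nlinarith

theorem stmt_3 {nu np : ℕ} (hnu : 0 < nu) (hnp : 0 < np)
    (A : Matrix (Fin nu) (Fin nu) ℝ)
    (B C : Matrix (Fin np) (Fin np) ℝ)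
    (D : Matrix (Fin np) (Fin nu) ℝ) (τ ω γ : ℝ)
    (hτ : 0 < τ) (hω : 0 < ω) (hγ0 : 0 < γ) (hγ1 : γ ≤ 1)
    (hA : A.PosDef) (hB : B.PosDef) (hC : C.PosDef)
    (hcoup : ∀ (v : Fin nu → ℝ) (q : Fin np → ℝ),
      q ⬝ᵥ D.mulVec v ≤ Real.sqrt ω * mnorm A v * mnorm C q)
    (M N : Matrix (Fin nu ⊕ Fin np) (Fin nu ⊕ Fin np) ℝ)
    (hM : M = (1 / γ) • fromBlocks A 0 D (C + τ • B))
    (hN : N = fromBlocks 0 Dᵀ 0 0 + ((1 - γ) / γ) • fromBlocks A 0 D (C + τ • B)) :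
    ∀ μ ∈ spectrum ℂ ((M⁻¹ * N).map (algebraMap ℝ ℂ)),
      ‖μ‖ ≤ max (1 - γ) (γ * ω - (1 - γ)) := by
  classical
  intro μ hμ
  set f : ℝ →+* ℂ := algebraMap ℝ ℂ with hf
  set Cτ : Matrix (Fin np) (Fin np) ℝ := C + τ • B with hCτdef
  -- Cτ is positive definite
  have hCτ : Cτ.PosDef := by
    refine Matrix.PosDef.of_dotProduct_mulVec_pos ?_ ?_
    · show Cτᴴ = Cτ
      ext i j
      have h1 := congrFun (congrFun (herm_real hC.1) i) j
      have h2 := congrFun (congrFun (herm_real hB.1) i) j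
      simp only [transpose_apply] at h1 h2
      simp [Cτ, conjTranspose_apply, h1, h2]
    · intro x hx
      have h1 := hC.dotProduct_mulVec_pos hx
      have h2 := hB.dotProduct_mulVec_pos hx
      simp only [star_trivial] at h1 h2 ⊢
      have : Cτ *ᵥ x = C *ᵥ x + τ • (B *ᵥ x) := by
        rw [hCτdef, Matrix.add_mulVec, Matrix.smul_mulVec]
      rw [this, dotProduct_add, dotProduct_smul, smul_eq_mul]
      nlinarith
  set L : Matrix (Fin nu ⊕ Fin np) (Fin nu ⊕ Fin np) ℝ := fromBlocks A 0 D Cτ with hLdef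
  set K : Matrix (Fin nu ⊕ Fin np) (Fin nu ⊕ Fin np) ℝ := fromBlocks 0 Dᵀ 0 0 with hKdef
  -- invertibility of M
  have hMdet : IsUnit M.det := by
    rw [hM, Matrix.det_smul]
    apply isUnit_iff_ne_zero.mpr
    apply mul_ne_zero
    · exact pow_ne_zero _ (one_div_ne_zero hγ0.ne')
    · rw [Matrix.det_fromBlocks_zero₁₂]
      exact (mul_pos hA.det_pos hCτ.det_pos).ne'
  have hMM : M * M⁻¹ = 1 := Matrix.mul_nonsing_inv _ hMdet
  -- eigenvector for μ
  rw [spectrum.mem_iff] at hμ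
  have hdet : (algebraMap ℂ (Matrix (Fin nu ⊕ Fin np) (Fin nu ⊕ Fin np) ℂ) μ -
      (M⁻¹ * N).map f).det = 0 := by
    by_contra h
    exact hμ ((Matrix.isUnit_iff_isUnit_det _).mpr (isUnit_iff_ne_zero.mpr h))
  obtain ⟨x, hx0, hxe⟩ := Matrix.exists_mulVec_eq_zero_iff.mpr hdet
  have hTx : ((M⁻¹ * N).map f) *ᵥ x = μ • x := by
    rw [Matrix.sub_mulVec, Algebra.algebraMap_eq_smul_one, Matrix.smul_mulVec,
      Matrix.one_mulVec, sub_eq_zero] at hxe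
    exact hxe.symm
  -- N x = μ • M x (over ℂ)
  have hmapmul : (M⁻¹ * N).map f = (M⁻¹).map f * N.map f := Matrix.map_mul
  have hMinv : (M.map f) * ((M⁻¹).map f) = 1 := by
    rw [← Matrix.map_mul, hMM, Matrix.map_one f (map_zero f) (map_one f)]
  have hNx : (N.map f) *ᵥ x = μ • ((M.map f) *ᵥ x) := by
    calc (N.map f) *ᵥ x = ((M.map f) * ((M⁻¹).map f * (N.map f))) *ᵥ x := by
          rw [← mul_assoc, hMinv, one_mul]
      _ = (M.map f) *ᵥ (((M⁻¹ * N).map f) *ᵥ x) := by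
          rw [Matrix.mulVec_mulVec, hmapmul]
      _ = (M.map f) *ᵥ (μ • x) := by rw [hTx]
      _ = μ • ((M.map f) *ᵥ x) := Matrix.mulVec_smul _ _ _
  -- rewrite in terms of K, L
  have hγc : (γ : ℂ) ≠ 0 := by exact_mod_cast hγ0.ne'
  set lam : ℂ := (μ - ((1 - γ : ℝ) : ℂ)) / (γ : ℂ) with hlamdef
  have hKL : (K.map f) *ᵥ x = lam • ((L.map f) *ᵥ x) := by
    have hNm : N.map f = K.map f + (((1 - γ) / γ : ℝ) : ℂ) • L.map f := by
      rw [hN, Matrix.map_add f (map_add f), map_smul_c]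
    have hMm : M.map f = ((1 / γ : ℝ) : ℂ) • L.map f := by
      rw [hM, map_smul_c]
    rw [hNm, hMm, Matrix.add_mulVec, Matrix.smul_mulVec, Matrix.smul_mulVec,
      smul_smul] at hNx
    have : (K.map f) *ᵥ x
        = (μ * ((1 / γ : ℝ) : ℂ) - (((1 - γ) / γ : ℝ) : ℂ)) • ((L.map f) *ᵥ x) := by
      rw [sub_smul]
      rw [← hNx]
      abel
    rw [this]
    congr 1
    rw [hlamdef]
    push_cast
    field_simp
  -- block components
  set u : Fin nu → ℂ := x ∘ Sum.inl with hudef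
  set p : Fin np → ℂ := x ∘ Sum.inr with hpdef
  have hmz : ∀ k l : ℕ, (0 : Matrix (Fin k) (Fin l) ℝ).map f = 0 := fun k l =>
    Matrix.map_zero f (map_zero f)
  have hKmap : K.map f = fromBlocks 0 (Dᵀ.map f) 0 0 := by
    rw [hKdef, Matrix.fromBlocks_map, hmz, hmz, hmz]
  have hLmap : L.map f = fromBlocks (A.map f) 0 (D.map f) (Cτ.map f) := by
    rw [hLdef, Matrix.fromBlocks_map, hmz]
  have E1 : (Dᵀ.map f) *ᵥ p = lam • ((A.map f) *ᵥ u) := by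
    funext i
    have h := congrFun hKL (Sum.inl i)
    rw [hKmap, hLmap] at h
    simpa [Matrix.fromBlocks_mulVec, Matrix.zero_mulVec] using h
  have E2 : lam • ((D.map f) *ᵥ u + (Cτ.map f) *ᵥ p) = 0 := by
    funext i
    have h := congrFun hKL (Sum.inr i)
    rw [hKmap, hLmap] at h
    simpa [Matrix.fromBlocks_mulVec, Matrix.zero_mulVec] using h.symm
  by_cases hlam : lam = 0
  · -- μ = 1 - γ
    have hμval : μ = ((1 - γ : ℝ) : ℂ) := by
      rw [hlamdef, div_eq_iff hγc] at hlam
      rw [sub_eq_iff_eq_add] at hlam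
      rw [hlam]; ring
    rw [hμval]
    rw [Complex.norm_real, Real.norm_eq_abs, abs_of_nonneg (by linarith)]
    exact le_max_left _ _
  · -- lam ≠ 0
    have hDu : (D.map f) *ᵥ u = -((Cτ.map f) *ᵥ p) := by
      have h := (smul_eq_zero.mp E2).resolve_left hlam
      exact eq_neg_of_add_eq_zero_left h
    -- scalar identity: lam * (u* A u) = -(p* Cτ p)
    have hDt : Dᵀ.map f = (D.map f)ᵀ := Matrix.transpose_map
    have hCt : (Cτ.map f)ᵀ = Cτ.map f := by
      rw [← Matrix.transpose_map, herm_real hCτ.1]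
    have hstarDu : (D.map f) *ᵥ star u = star ((D.map f) *ᵥ u) := by
      rw [Matrix.star_mulVec]
      rw [show (D.map f)ᴴ = Dᵀ.map f from by
        ext i j
        simp [hf, Matrix.conjTranspose_apply, Matrix.map_apply, Complex.conj_ofReal]]
      rw [hDt, Matrix.vecMul_transpose]
    have hstarCp : star ((Cτ.map f) *ᵥ p) ⬝ᵥ p = star p ⬝ᵥ ((Cτ.map f) *ᵥ p) := by
      rw [Matrix.star_mulVec, show (Cτ.map f)ᴴ = Cτ.map f from by
        ext i j
        have := congrFun (congrFun (herm_real hCτ.1) i) j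
        simp only [transpose_apply] at this
        simp [hf, Matrix.conjTranspose_apply, Matrix.map_apply, Complex.conj_ofReal, this]]
      rw [← Matrix.dotProduct_mulVec]
    have key : lam * (star u ⬝ᵥ (A.map f) *ᵥ u) = -(star p ⬝ᵥ (Cτ.map f) *ᵥ p) := by
      have h1 : star u ⬝ᵥ ((Dᵀ.map f) *ᵥ p) = lam * (star u ⬝ᵥ (A.map f) *ᵥ u) := by
        rw [E1, dotProduct_smul, smul_eq_mul]
      have h2 : star u ⬝ᵥ ((Dᵀ.map f) *ᵥ p) = -(star p ⬝ᵥ (Cτ.map f) *ᵥ p) := by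
        rw [hDt, Matrix.dotProduct_mulVec, Matrix.vecMul_transpose, hstarDu, hDu,
          star_neg, neg_dotProduct, hstarCp]
      rw [← h1, h2]
    -- u ≠ 0
    have hu0 : u ≠ 0 := by
      intro h
      apply hx0
      have hCp : (Cτ.map f) *ᵥ p = 0 := by
        have : (D.map f) *ᵥ u = 0 := by rw [h, Matrix.mulVec_zero]
        rw [this] at hDu
        exact (neg_eq_zero.mp hDu.symm)
      have hp0 : p = 0 := quad_zero hCτ (by rw [hCp, dotProduct_zero])
      funext i
      rcases i with i | i
      · exact congrFun h i
      · exact congrFun hp0 i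
    obtain ⟨qa, hqa, hqae⟩ := quad_pos_s3 hA hu0
    obtain ⟨qc, hqc, hqce⟩ := quad_nonneg_s3 hCτ p
    set r : ℝ := -(qc / qa) with hrdef
    have hlamr : lam = (r : ℂ) := by
      rw [hqae, hqce] at key
      have hqac : (qa : ℂ) ≠ 0 := by exact_mod_cast hqa.ne'
      rw [hrdef]
      push_cast
      field_simp
      linear_combination key
    have hrne : r ≠ 0 := by
      intro h
      exact hlam (by rw [hlamr, h, Complex.ofReal_zero])
    have hrle : r ≤ 0 := by
      rw [hrdef]
      exact neg_nonpos_of_nonneg (div_nonneg hqc hqa.le)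
    have hrneg : r < 0 := hrle.lt_of_ne hrne
    -- real eigenvector for r
    have hker : ((K - r • L).map f) *ᵥ x = 0 := by
      have hsub : (K - r • L).map f = K.map f - (r : ℂ) • L.map f := by
        rw [Matrix.map_sub f (map_sub f), map_smul_c]
      rw [hsub, Matrix.sub_mulVec, Matrix.smul_mulVec, hKL, hlamr, sub_self]
    have hdetr : (K - r • L).det = 0 := by
      have hcd : ((K - r • L).map f).det = 0 :=
        Matrix.exists_mulVec_eq_zero_iff.mp ⟨x, hx0, hker⟩
      have hcd2 : f ((K - r • L).det) = 0 := by
        rw [RingHom.map_det f]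
        exact hcd
      rw [hf, Complex.coe_algebraMap] at hcd2
      exact_mod_cast hcd2
    obtain ⟨y, hy0, hyk⟩ := Matrix.exists_mulVec_eq_zero_iff.mpr hdetr
    have hKy : K *ᵥ y = r • (L *ᵥ y) := by
      rw [Matrix.sub_mulVec, Matrix.smul_mulVec, sub_eq_zero] at hyk
      exact hyk
    set v : Fin nu → ℝ := y ∘ Sum.inl with hvdef
    set q : Fin np → ℝ := y ∘ Sum.inr with hqdef
    have R1 : Dᵀ *ᵥ q = r • (A *ᵥ v) := by
      funext i
      have h := congrFun hKy (Sum.inl i)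
      rw [hKdef, hLdef] at h
      simpa [Matrix.fromBlocks_mulVec, Matrix.zero_mulVec] using h
    have R2 : r • (D *ᵥ v + Cτ *ᵥ q) = 0 := by
      funext i
      have h := congrFun hKy (Sum.inr i)
      rw [hKdef, hLdef] at h
      simpa [Matrix.fromBlocks_mulVec, Matrix.zero_mulVec] using h.symm
    have hDv : D *ᵥ v = -(Cτ *ᵥ q) := by
      have h := (smul_eq_zero.mp R2).resolve_left hrne
      exact eq_neg_of_add_eq_zero_left h
    have hv0 : v ≠ 0 := by
      intro h
      apply hy0
      have hCq : Cτ *ᵥ q = 0 := by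
        have : D *ᵥ v = 0 := by rw [h, Matrix.mulVec_zero]
        rw [this] at hDv
        exact (neg_eq_zero.mp hDv.symm)
      have hq0 : q = 0 := by
        by_contra hq
        have := hCτ.dotProduct_mulVec_pos hq
        rw [hCq] at this
        simp at this
      funext i
      rcases i with i | i
      · exact congrFun h i
      · exact congrFun hq0 i
    set α : ℝ := v ⬝ᵥ A *ᵥ v with hαdef
    set β : ℝ := q ⬝ᵥ Cτ *ᵥ q with hβdef
    set δ : ℝ := q ⬝ᵥ C *ᵥ q with hδdef
    have hα : 0 < α := by
      have := hA.dotProduct_mulVec_pos hv0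
      simpa using this
    have hqDv : q ⬝ᵥ D *ᵥ v = r * α := by
      rw [Matrix.dotProduct_mulVec, show q ᵥ* D = Dᵀ *ᵥ q from by
        rw [← Matrix.vecMul_transpose, Matrix.transpose_transpose], R1,
        smul_dotProduct, smul_eq_mul]
      congr 1
      rw [dotProduct_comm]
    have hqDv' : q ⬝ᵥ D *ᵥ v = -β := by
      rw [hDv, dotProduct_neg]
    have hkeyR : r * α = -β := by rw [← hqDv, hqDv']
    have hδ0 : 0 ≤ δ := by
      have := hC.posSemidef.dotProduct_mulVec_nonneg q
      simpa using this
    have hδβ : δ ≤ β := by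
      have hBq : 0 ≤ q ⬝ᵥ B *ᵥ q := by
        have := hB.posSemidef.dotProduct_mulVec_nonneg q
        simpa using this
      have : β = δ + τ * (q ⬝ᵥ B *ᵥ q) := by
        rw [hβdef, hδdef, hCτdef, Matrix.add_mulVec, dotProduct_add,
          Matrix.smul_mulVec, dotProduct_smul, smul_eq_mul]
      nlinarith
    have hcoup1 : β ≤ Real.sqrt ω * Real.sqrt α * Real.sqrt δ := by
      have h := hcoup (-v) q
      have hm : mnorm A (-v) = Real.sqrt α := by
        rw [mnorm, hαdef]
        congr 1
        rw [Matrix.mulVec_neg, dotProduct_neg, neg_dotProduct, neg_neg]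
      have hmq : mnorm C q = Real.sqrt δ := rfl
      rw [Matrix.mulVec_neg, dotProduct_neg, hqDv', neg_neg, hm, hmq] at h
      exact h
    have hμval : μ = ((γ * r + (1 - γ) : ℝ) : ℂ) := by
      rw [hlamdef, div_eq_iff hγc] at hlamr
      push_cast at hlamr ⊢
      linear_combination hlamr
    rw [hμval, Complex.norm_real, Real.norm_eq_abs]
    exact arith_bound hω hγ0 hγ1 hα hδ0 hδβ hkeyR hrneg hcoup1
end

section
/- Let γ := 2/(2+ω) and S := (1−γ)·I − γ·C_τ⁻¹ D A⁻¹ Dᵀ, where I is the n_p×n_p identity matrix. If qᵀDv ≤ √ω ‖v‖_A ‖q‖_C for all v, q, then ‖S x‖_{C_τ} ≤ (1−γ)·‖x‖_{C_τ} = (ω/(2+ω))·‖x‖_{C_τ} for every x ∈ ℝ^{n_p}. -/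
open Matrix

lemma quad_symm {n : ℕ} {M : Matrix (Fin n) (Fin n) ℝ} (hM : Mᵀ = M)
    (x y : Fin n → ℝ) : x ⬝ᵥ M.mulVec y = y ⬝ᵥ M.mulVec x := by
  rw [dotProduct_mulVec, ← mulVec_transpose, hM, dotProduct_comm]

lemma psd_cs {n : ℕ} {M : Matrix (Fin n) (Fin n) ℝ} (hM : M.PosSemidef)
    (x y : Fin n → ℝ) :
    (x ⬝ᵥ M.mulVec y) ^ 2 ≤ (x ⬝ᵥ M.mulVec x) * (y ⬝ᵥ M.mulVec y) := by
  have hsymm : Mᵀ = M := by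
    have := hM.isHermitian.eq
    rwa [conjTranspose_eq_transpose_of_trivial] at this
  have key : discrim (y ⬝ᵥ M.mulVec y) (2 * (x ⬝ᵥ M.mulVec y)) (x ⬝ᵥ M.mulVec x) ≤ 0 := by
    apply discrim_le_zero
    intro t
    have h0 := hM.dotProduct_mulVec_nonneg (x + t • y)
    simp only [star_trivial, mulVec_add, mulVec_smul, dotProduct_add, add_dotProduct,
      smul_dotProduct, dotProduct_smul, smul_eq_mul] at h0
    have hyx : y ⬝ᵥ M.mulVec x = x ⬝ᵥ M.mulVec y := quad_symm hsymm y x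
    rw [hyx] at h0
    nlinarith [h0]
  rw [discrim] at key
  nlinarith [key]

theorem stmt_6 {nu np : ℕ} (hnu : 0 < nu) (hnp : 0 < np)
    (A : Matrix (Fin nu) (Fin nu) ℝ)
    (B C : Matrix (Fin np) (Fin np) ℝ)
    (D : Matrix (Fin np) (Fin nu) ℝ) (τ ω γ : ℝ)
    (hτ : 0 < τ) (hω : 0 < ω) (hγ : γ = 2 / (2 + ω))
    (hA : A.PosDef) (hB : B.PosDef) (hC : C.PosDef)
    (hcoup : ∀ (v : Fin nu → ℝ) (q : Fin np → ℝ),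
      q ⬝ᵥ D.mulVec v ≤ Real.sqrt ω * mnorm A v * mnorm C q)
    (S : Matrix (Fin np) (Fin np) ℝ)
    (hS : S = (1 - γ) • (1 : Matrix (Fin np) (Fin np) ℝ)
        - γ • ((C + τ • B)⁻¹ * D * A⁻¹ * Dᵀ)) :
    ∀ x : Fin np → ℝ,
      mnorm (C + τ • B) (S.mulVec x) ≤ (1 - γ) * mnorm (C + τ • B) x ∧
        (1 - γ) * mnorm (C + τ • B) x = (ω / (2 + ω)) * mnorm (C + τ • B) x := by
  intro x
  have h2ω : (0:ℝ) < 2 + ω := by linarith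
  have hγpos : 0 < γ := by rw [hγ]; positivity
  have hγlt : γ < 1 := by rw [hγ]; rw [div_lt_one h2ω]; linarith
  have h1γ : (0:ℝ) ≤ 1 - γ := by linarith
  -- the key algebraic identity
  have hγω : γ * ω = 2 * (1 - γ) := by subst hγ; field_simp; ring
  set Cτ := C + τ • B with hCτdef
  have hτB : (τ • B : Matrix (Fin np) (Fin np) ℝ).PosSemidef := by
    have hherm : (τ • B).IsHermitian := by
      unfold Matrix.IsHermitian
      rw [conjTranspose_smul, hB.isHermitian.eq, star_trivial]
    refine PosSemidef.of_dotProduct_mulVec_nonneg hherm ?_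
    intro z
    simp only [star_trivial, smul_mulVec, dotProduct_smul, smul_eq_mul]
    exact mul_nonneg hτ.le (hB.posSemidef.dotProduct_mulVec_nonneg z)
  have hCτ : Cτ.PosDef := hC.add_posSemidef hτB
  have hCτsymm : Cτᵀ = Cτ := by
    have := hCτ.isHermitian.eq
    rwa [conjTranspose_eq_transpose_of_trivial] at this
  set E : Matrix (Fin np) (Fin np) ℝ := D * A⁻¹ * Dᵀ with hEdef
  have hE : E.PosSemidef := by
    have h := hA.inv.posSemidef.mul_mul_conjTranspose_same D
    rwa [conjTranspose_eq_transpose_of_trivial] at h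
  -- E ≤ ω Cτ (quadratic forms), via hcoup
  have hkey : ∀ z : Fin np → ℝ, z ⬝ᵥ E.mulVec z ≤ ω * (z ⬝ᵥ Cτ.mulVec z) := by
    intro z
    set v : Fin nu → ℝ := A⁻¹.mulVec (Dᵀ.mulVec z) with hv
    have hEz : E.mulVec z = D.mulVec v := by
      rw [hEdef, ← mulVec_mulVec, ← mulVec_mulVec]
    have hAv : A.mulVec v = Dᵀ.mulVec z := by
      rw [hv, mulVec_mulVec, mul_nonsing_inv _ hA.det_pos.ne'.isUnit, one_mulVec]
    have hvAv : v ⬝ᵥ A.mulVec v = z ⬝ᵥ E.mulVec z := by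
      rw [hAv, dotProduct_mulVec, vecMul_transpose, dotProduct_comm, hEz]
    set e := z ⬝ᵥ E.mulVec z with he
    have he0 : 0 ≤ e := by simpa [star_trivial] using hE.dotProduct_mulVec_nonneg z
    have hc0 : 0 ≤ z ⬝ᵥ C.mulVec z := by simpa [star_trivial] using hC.posSemidef.dotProduct_mulVec_nonneg z
    have hcp := hcoup v z
    rw [← hEz] at hcp
    -- hcp : e ≤ √ω * √(v⬝Av) * √(z⬝Cz) = √ω * √e * √(z⬝Cz)
    have hcp2 : e ≤ Real.sqrt ω * Real.sqrt e * Real.sqrt (z ⬝ᵥ C.mulVec z) := by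
      simpa [mnorm, hvAv, ← he] using hcp
    have heC : e ≤ ω * (z ⬝ᵥ C.mulVec z) := by
      rcases eq_or_lt_of_le he0 with h0 | h0
      · rw [← h0]; positivity
      · have hse : Real.sqrt e > 0 := Real.sqrt_pos.mpr h0
        have h1 : Real.sqrt e ≤ Real.sqrt ω * Real.sqrt (z ⬝ᵥ C.mulVec z) := by
          have : Real.sqrt e * Real.sqrt e ≤ Real.sqrt e * (Real.sqrt ω * Real.sqrt (z ⬝ᵥ C.mulVec z)) := by
            rw [Real.mul_self_sqrt he0]
            · calc e ≤ Real.sqrt ω * Real.sqrt e * Real.sqrt (z ⬝ᵥ C.mulVec z) := hcp2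
                _ = Real.sqrt e * (Real.sqrt ω * Real.sqrt (z ⬝ᵥ C.mulVec z)) := by ring
          exact le_of_mul_le_mul_left this hse
        calc e = Real.sqrt e * Real.sqrt e := (Real.mul_self_sqrt he0).symm
          _ ≤ (Real.sqrt ω * Real.sqrt (z ⬝ᵥ C.mulVec z)) * (Real.sqrt ω * Real.sqrt (z ⬝ᵥ C.mulVec z)) := by
              apply mul_le_mul h1 h1 hse.le; positivity
          _ = (Real.sqrt ω * Real.sqrt ω) * (Real.sqrt (z ⬝ᵥ C.mulVec z) * Real.sqrt (z ⬝ᵥ C.mulVec z)) := by ring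
          _ = ω * (z ⬝ᵥ C.mulVec z) := by rw [Real.mul_self_sqrt hω.le, Real.mul_self_sqrt hc0]
    have hCCτ : z ⬝ᵥ C.mulVec z ≤ z ⬝ᵥ Cτ.mulVec z := by
      have hτB2 : 0 ≤ z ⬝ᵥ (τ • B).mulVec z := by simpa [star_trivial] using hτB.dotProduct_mulVec_nonneg z
      rw [hCτdef, add_mulVec, dotProduct_add]
      linarith
    calc e ≤ ω * (z ⬝ᵥ C.mulVec z) := heC
      _ ≤ ω * (z ⬝ᵥ Cτ.mulVec z) := by
          apply mul_le_mul_of_nonneg_left hCCτ hω.le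
  -- setup y and expansion
  set y : Fin np → ℝ := Cτ⁻¹.mulVec (E.mulVec x) with hy
  have hCτy : Cτ.mulVec y = E.mulVec x := by
    rw [hy, mulVec_mulVec, mul_nonsing_inv _ hCτ.det_pos.ne'.isUnit, one_mulVec]
  have hSx : S.mulVec x = (1 - γ) • x - γ • y := by
    have hassoc : Cτ⁻¹ * D * A⁻¹ * Dᵀ = Cτ⁻¹ * E := by
      rw [hEdef, Matrix.mul_assoc, Matrix.mul_assoc, Matrix.mul_assoc]
    rw [hS, hassoc, sub_mulVec, smul_mulVec, one_mulVec, smul_mulVec,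
      ← mulVec_mulVec, ← hy]
  set X := x ⬝ᵥ Cτ.mulVec x with hX
  set e := x ⬝ᵥ E.mulVec x with he
  set m := y ⬝ᵥ E.mulVec x with hm
  set f := y ⬝ᵥ E.mulVec y with hf
  have he0 : 0 ≤ e := by simpa [star_trivial] using hE.dotProduct_mulVec_nonneg x
  have hX0 : 0 ≤ X := by simpa [star_trivial] using hCτ.posSemidef.dotProduct_mulVec_nonneg x
  have hyCy : y ⬝ᵥ Cτ.mulVec y = m := by rw [hCτy]
  have hm0 : 0 ≤ m := by
    rw [← hyCy]; simpa [star_trivial] using hCτ.posSemidef.dotProduct_mulVec_nonneg y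
  have hxCy : x ⬝ᵥ Cτ.mulVec y = e := by rw [hCτy]
  have hyCx : y ⬝ᵥ Cτ.mulVec x = e := by rw [quad_symm hCτsymm, hxCy]
  -- CS : m^2 ≤ f * e
  have hcs : m ^ 2 ≤ f * e := psd_cs hE y x
  have hfm : f ≤ ω * m := by rw [← hyCy]; exact hkey y
  have hmω : m ≤ ω * e := by
    rcases eq_or_lt_of_le hm0 with h0 | h0
    · rw [← h0]; positivity
    · nlinarith [hcs, hfm, h0, he0]
  -- expand the norm of Sx
  have hN : S.mulVec x ⬝ᵥ Cτ.mulVec (S.mulVec x)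
      = (1 - γ)^2 * X - 2 * γ * (1 - γ) * e + γ^2 * m := by
    rw [hSx]
    simp only [mulVec_sub, mulVec_smul, sub_dotProduct, dotProduct_sub,
      smul_dotProduct, dotProduct_smul, smul_eq_mul]
    rw [hxCy, hyCx, hyCy, ← hX]
    ring
  have hNle : S.mulVec x ⬝ᵥ Cτ.mulVec (S.mulVec x) ≤ (1 - γ)^2 * X := by
    rw [hN]
    have : γ^2 * m ≤ 2 * γ * (1 - γ) * e := by
      calc γ^2 * m ≤ γ^2 * (ω * e) := by
              apply mul_le_mul_of_nonneg_left hmω; positivity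
        _ = γ * (γ * ω) * e := by ring
        _ = 2 * γ * (1 - γ) * e := by rw [hγω]; ring
    linarith
  constructor
  · rw [mnorm, mnorm]
    calc Real.sqrt (S.mulVec x ⬝ᵥ Cτ.mulVec (S.mulVec x))
        ≤ Real.sqrt ((1 - γ)^2 * X) := Real.sqrt_le_sqrt hNle
      _ = (1 - γ) * Real.sqrt X := by
          rw [Real.sqrt_mul (by positivity), Real.sqrt_sq h1γ]
  · have : 1 - γ = ω / (2 + ω) := by rw [hγ]; field_simp; ring
    rw [this]
end

section
/- Let γ ∈ (0,1], K ≥ 1 a natural number, and S an n_p×n_p real matrix satisfying ‖S x‖_{C_τ} ≤ (1−γ)·‖x‖_{C_τ} for all x ∈ ℝ^{n_p}. Then the matrix S̃ := S^{K−1} + γ·∑_{k=0}^{K−2} S^k satisfies ‖S̃ x‖_{C_τ} ≤ ‖x‖_{C_τ} for every x ∈ ℝ^{n_p}. -/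
open Matrix

theorem stmt_7 {np : ℕ} (hnp : 0 < np)
    (B C : Matrix (Fin np) (Fin np) ℝ) (τ γ : ℝ) (K : ℕ)
    (hτ : 0 < τ) (hγ0 : 0 < γ) (hγ1 : γ ≤ 1) (hK : 1 ≤ K)
    (hB : B.PosDef) (hC : C.PosDef)
    (S : Matrix (Fin np) (Fin np) ℝ)
    (hS : ∀ x : Fin np → ℝ,
      mnorm (C + τ • B) (S.mulVec x) ≤ (1 - γ) * mnorm (C + τ • B) x) :
    ∀ x : Fin np → ℝ,
      mnorm (C + τ • B)
        ((S ^ (K - 1) + γ • ∑ k ∈ Finset.range (K - 1), S ^ k).mulVec x)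
        ≤ mnorm (C + τ • B) x := by
  set M : Matrix (Fin np) (Fin np) ℝ := C + τ • B with hMdef
  have hM : M.PosDef := by
    refine Matrix.PosDef.of_dotProduct_mulVec_pos (hC.isHermitian.add ?_) fun x hx => ?_
    · show (τ • B)ᴴ = τ • B
      rw [Matrix.conjTranspose_smul, hB.isHermitian.eq]
      simp
    · have h1 := hC.dotProduct_mulVec_pos hx
      have h2 := hB.dotProduct_mulVec_pos hx
      have : (0:ℝ) < star x ⬝ᵥ (τ • B) *ᵥ x := by
        rw [Matrix.smul_mulVec, dotProduct_smul]
        exact mul_pos hτ h2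
      rw [hMdef, Matrix.add_mulVec, dotProduct_add]
      linarith
  set Nr : (Fin np → ℝ) → ℝ :=
    fun y => @norm _ (Matrix.toNormedAddCommGroup M hM).toNorm y with hNr
  have hnorm : ∀ y : Fin np → ℝ, mnorm M y = Nr y := by
    intro y
    show Real.sqrt (y ⬝ᵥ M *ᵥ y) = Real.sqrt (RCLike.re ((M *ᵥ y) ⬝ᵥ star y))
    congr 1
    exact dotProduct_comm _ _
  have hadd : ∀ a b : Fin np → ℝ, Nr (a + b) ≤ Nr a + Nr b := fun a b =>
    @norm_add_le _ (@SeminormedAddCommGroup.toSeminormedAddGroup _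
      (Matrix.toNormedAddCommGroup M hM).toSeminormedAddCommGroup) a b
  have hsum : ∀ (s : Finset ℕ) (f : ℕ → Fin np → ℝ),
      Nr (∑ k ∈ s, f k) ≤ ∑ k ∈ s, Nr (f k) := fun s f =>
    @norm_sum_le _ _ (Matrix.toNormedAddCommGroup M hM).toSeminormedAddCommGroup s f
  have hsmul : ∀ (c : ℝ) (a : Fin np → ℝ), Nr (c • a) = |c| * Nr a := by
    intro c a
    show Real.sqrt (RCLike.re ((M *ᵥ (c • a)) ⬝ᵥ star (c • a)))
        = |c| * Real.sqrt (RCLike.re ((M *ᵥ a) ⬝ᵥ star a))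
    rw [dotProduct_comm (M *ᵥ (c • a)), dotProduct_comm (M *ᵥ a)]
    have : star (c • a) ⬝ᵥ M *ᵥ (c • a) = c ^ 2 * (star a ⬝ᵥ M *ᵥ a) := by
      rw [Matrix.mulVec_smul, dotProduct_smul, star_smul, smul_dotProduct,
        star_trivial, smul_eq_mul, smul_eq_mul]
      ring
    rw [this]
    rw [show RCLike.re (c ^ 2 * (star a ⬝ᵥ M *ᵥ a)) = c ^ 2 * (star a ⬝ᵥ M *ᵥ a) from rfl,
      show RCLike.re (star a ⬝ᵥ M *ᵥ a) = star a ⬝ᵥ M *ᵥ a from rfl,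
      Real.sqrt_mul (sq_nonneg c), Real.sqrt_sq_eq_abs]
  have hγ' : (0:ℝ) ≤ 1 - γ := by linarith
  have hS' : ∀ x : Fin np → ℝ, Nr (S.mulVec x) ≤ (1 - γ) * Nr x := by
    intro x; have := hS x; rwa [hnorm, hnorm] at this
  have hSpow : ∀ (k : ℕ) (x : Fin np → ℝ), Nr ((S ^ k).mulVec x) ≤ (1 - γ) ^ k * Nr x := by
    intro k
    induction k with
    | zero => intro x; simp [Matrix.one_mulVec]
    | succ n ih =>
      intro x
      rw [pow_succ', ← Matrix.mulVec_mulVec]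
      calc Nr (S.mulVec ((S ^ n).mulVec x))
          ≤ (1 - γ) * Nr ((S ^ n).mulVec x) := hS' _
        _ ≤ (1 - γ) * ((1 - γ) ^ n * Nr x) := mul_le_mul_of_nonneg_left (ih x) hγ'
        _ = (1 - γ) ^ (n + 1) * Nr x := by ring
  intro x
  rw [hnorm, hnorm]
  set m := K - 1
  rw [Matrix.add_mulVec, Matrix.smul_mulVec]
  have hsumv : (∑ k ∈ Finset.range m, S ^ k).mulVec x
      = ∑ k ∈ Finset.range m, (S ^ k).mulVec x :=
    map_sum (AddMonoidHom.mk' (fun A : Matrix (Fin np) (Fin np) ℝ => A.mulVec x)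
      (fun A B => Matrix.add_mulVec A B x)) (fun k => S ^ k) (Finset.range m)
  have hNx : 0 ≤ Nr x := Real.sqrt_nonneg _
  calc Nr ((S ^ m).mulVec x + γ • (∑ k ∈ Finset.range m, S ^ k).mulVec x)
      ≤ Nr ((S ^ m).mulVec x) + Nr (γ • (∑ k ∈ Finset.range m, S ^ k).mulVec x) := hadd _ _
    _ = Nr ((S ^ m).mulVec x) + γ * Nr ((∑ k ∈ Finset.range m, S ^ k).mulVec x) := by
        rw [hsmul, abs_of_pos hγ0]
    _ ≤ (1 - γ) ^ m * Nr x + γ * (∑ k ∈ Finset.range m, (1 - γ) ^ k * Nr x) := by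
        gcongr
        · exact hSpow m x
        rw [hsumv]
        exact (hsum _ _).trans (Finset.sum_le_sum fun k _ => hSpow k x)
    _ = ((1 - γ) ^ m + γ * ∑ k ∈ Finset.range m, (1 - γ) ^ k) * Nr x := by
        rw [← Finset.sum_mul]; ring
    _ ≤ 1 * Nr x := by
        refine mul_le_mul_of_nonneg_right ?_ hNx
        have hne : (1 - γ : ℝ) ≠ 1 := by intro h; linarith
        rw [geom_sum_eq hne]
        have h1 : (1 - γ - 1 : ℝ) = -γ := by ring
        rw [h1]
        have h2 : γ * (((1 - γ) ^ m - 1) / -γ) = 1 - (1 - γ) ^ m := by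
          rw [div_neg, mul_neg, mul_div_assoc', mul_div_cancel_left₀ _ (ne_of_gt hγ0)]
          ring
        rw [h2]
        linarith
    _ = Nr x := one_mul _
end

section
/- Let T be an n×n real matrix, γ a real number, r ∈ ℝⁿ, and S := γ·T + (1−γ)·I. Suppose sequences (p̂_k)_{k≥1} and (p_k)_{k≥0} in ℝⁿ satisfy p̂_k = T·p_{k−1} + r for all k ≥ 1 and p_k = γ·p̂_k + (1−γ)·p_{k−1} for all k ≥ 1. Then for every k ≥ 0 one has p̂_{k+1} − p_k = S^k·(p̂_1 − p_0). -/
open Matrix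

theorem stmt_8 {n : ℕ} (hn : 0 < n)
    (T : Matrix (Fin n) (Fin n) ℝ) (γ : ℝ) (r : Fin n → ℝ)
    (S : Matrix (Fin n) (Fin n) ℝ)
    (hS : S = γ • T + (1 - γ) • (1 : Matrix (Fin n) (Fin n) ℝ))
    (phat p : ℕ → Fin n → ℝ)
    (hhat : ∀ k, 1 ≤ k → phat k = T.mulVec (p (k - 1)) + r)
    (hrel : ∀ k, 1 ≤ k → p k = γ • phat k + (1 - γ) • p (k - 1)) :
    ∀ k : ℕ, phat (k + 1) - p k = (S ^ k).mulVec (phat 1 - p 0) := by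
  intro k
  induction k with
  | zero => simp
  | succ k ih =>
    have h1 : phat (k + 2) = T.mulVec (p (k + 1)) + r := by
      have := hhat (k+2) (by omega); simpa using this
    have h2 : phat (k + 1) = T.mulVec (p k) + r := by
      have := hhat (k+1) (by omega); simpa using this
    have h3 : p (k + 1) = γ • phat (k+1) + (1 - γ) • p k := by
      have := hrel (k+1) (by omega); simpa using this
    have key : phat (k+2) - p (k+1) = S.mulVec (phat (k+1) - p k) := by
      subst hS
      rw [h1, h3]
      simp only [h2, Matrix.mulVec_add, Matrix.mulVec_smul, Matrix.add_mulVec,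
        Matrix.smul_mulVec, Matrix.one_mulVec, Matrix.mulVec_sub]
      module
    show phat (k+2) - p (k+1) = _
    rw [key, ih, Matrix.mulVec_mulVec, ← pow_succ']
end

section
/- Let T be an n×n real matrix, γ a real number, r ∈ ℝⁿ, and S := γ·T + (1−γ)·I. Suppose sequences (p̂_k)_{k≥1} and (p_k)_{k≥0} in ℝⁿ satisfy p̂_k = T·p_{k−1} + r for all k ≥ 1 and p_k = γ·p̂_k + (1−γ)·p_{k−1} for all k ≥ 1. Then for every natural number K ≥ 1, p̂_K − p_0 = (S^{K−1} + γ·∑_{k=0}^{K−2} S^k)·(p̂_1 − p_0), where the sum is empty (the zero matrix) when K = 1. -/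
open Matrix

theorem stmt_9 {n : ℕ} (hn : 0 < n)
    (T : Matrix (Fin n) (Fin n) ℝ) (γ : ℝ) (r : Fin n → ℝ)
    (S : Matrix (Fin n) (Fin n) ℝ)
    (hS : S = γ • T + (1 - γ) • (1 : Matrix (Fin n) (Fin n) ℝ))
    (phat p : ℕ → Fin n → ℝ)
    (hhat : ∀ k, 1 ≤ k → phat k = T.mulVec (p (k - 1)) + r)
    (hrel : ∀ k, 1 ≤ k → p k = γ • phat k + (1 - γ) • p (k - 1)) :
    ∀ K : ℕ, 1 ≤ K →
      phat K - p 0 =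
        ((S ^ (K - 1) + γ • ∑ k ∈ Finset.range (K - 1), S ^ k)).mulVec
          (phat 1 - p 0) := by
  have hE : ∀ k, 1 ≤ k → phat k - p (k - 1) = (S ^ (k - 1)).mulVec (phat 1 - p 0) := by
    intro k hk
    induction k with
    | zero => omega
    | succ m ih =>
      rcases Nat.lt_or_ge m 1 with h1 | hm
      · interval_cases m
        simp [Matrix.one_mulVec]
      · have ihm := ih hm
        have hp : phat (m + 1) = T.mulVec (p m) + r := by
          simpa using hhat (m + 1) (by omega)
        have hpm : phat m = T.mulVec (p (m - 1)) + r := hhat m hm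
        have hr : p m = γ • phat m + (1 - γ) • p (m - 1) := hrel m hm
        have key : phat (m + 1) - p m = S.mulVec (phat m - p (m - 1)) := by
          rw [hS, hp, hr, Matrix.add_mulVec, Matrix.smul_mulVec,
            Matrix.smul_mulVec, Matrix.one_mulVec, Matrix.mulVec_sub, hpm,
            Matrix.mulVec_add, Matrix.mulVec_smul, Matrix.mulVec_smul]
          module
        have : phat (m + 1) - p m = (S ^ m).mulVec (phat 1 - p 0) := by
          rw [key, ihm, Matrix.mulVec_mulVec, ← pow_succ', Nat.sub_add_cancel hm]
        simpa using this
  intro K hK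
  induction K with
  | zero => omega
  | succ m ih =>
    rcases Nat.lt_or_ge m 1 with h1 | hm
    · interval_cases m
      simp [Matrix.one_mulVec]
    · have IH := ih hm
      have eK := hE m hm
      have eK1 : phat (m + 1) - p m = (S ^ m).mulVec (phat 1 - p 0) := by
        simpa using hE (m + 1) (by omega)
      have split : phat (m + 1) - p 0 =
          (phat (m + 1) - p m) + (γ - 1) • (phat m - p (m - 1)) + (phat m - p 0) := by
        rw [hrel m hm]
        module
      obtain ⟨j, rfl⟩ : ∃ j, m = j + 1 := ⟨m - 1, by omega⟩
      have hmat : S ^ (j + 1) + (γ - 1) • S ^ (j + 1 - 1) +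
          (S ^ (j + 1 - 1) + γ • ∑ k ∈ Finset.range (j + 1 - 1), S ^ k) =
          S ^ (j + 1 + 1 - 1) + γ • ∑ k ∈ Finset.range (j + 1 + 1 - 1), S ^ k := by
        simp only [Nat.add_sub_cancel, Finset.sum_range_succ]
        module
      rw [split, eK1, eK, IH, ← Matrix.smul_mulVec, ← Matrix.add_mulVec,
        ← Matrix.add_mulVec, hmat]
end

section
/- Define the fixed-stress splitting matrices M := [[A, −Dᵀ],[0, C_τ + D A⁻¹ Dᵀ]] and N := [[0, 0],[−D, D A⁻¹ Dᵀ]] as (n_u+n_p)×(n_u+n_p) block matrices. Then N·M⁻¹·N = 0, i.e., (M⁻¹N)² = 0. Consequently, for any right-hand side b and any starting vector x_0, the fixed-stress iteration x_{k+1} = M⁻¹(N x_k + b) reaches the exact solution of (M − N)x = b after two steps: x_2 = (M − N)⁻¹ b. -/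
open Matrix

theorem stmt_12 {nu np : ℕ} (hnu : 0 < nu) (hnp : 0 < np)
    (A : Matrix (Fin nu) (Fin nu) ℝ)
    (B C : Matrix (Fin np) (Fin np) ℝ)
    (D : Matrix (Fin np) (Fin nu) ℝ) (τ : ℝ) (hτ : 0 < τ)
    (hA : A.PosDef) (hB : B.PosDef) (hC : C.PosDef)
    (M N : Matrix (Fin nu ⊕ Fin np) (Fin nu ⊕ Fin np) ℝ)
    (hM : M = fromBlocks A (-Dᵀ) 0 ((C + τ • B) + D * A⁻¹ * Dᵀ))
    (hN : N = fromBlocks 0 0 (-D) (D * A⁻¹ * Dᵀ)) :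
    N * M⁻¹ * N = 0 ∧ (M⁻¹ * N) ^ 2 = 0 ∧
      ∀ (b : Fin nu ⊕ Fin np → ℝ) (x : ℕ → Fin nu ⊕ Fin np → ℝ),
        (∀ k : ℕ, x (k + 1) = M⁻¹.mulVec (N.mulVec (x k) + b)) →
          x 2 = (M - N)⁻¹.mulVec b := by
  -- τ • B is positive definite
  have hτB : (τ • B).PosDef := by
    refine ⟨?_, fun x hx => ?_⟩
    · unfold Matrix.IsHermitian
      rw [conjTranspose_smul, hB.1.eq]
      simp
    · exact (hB.smul hτ).2 hx
  -- D * A⁻¹ * Dᵀ is positive semidefinite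
  have hDAD : (D * A⁻¹ * Dᵀ).PosSemidef := by
    have := (hA.inv.posSemidef).mul_mul_conjTranspose_same D
    simpa using this
  -- the Schur block is positive definite
  have hS : ((C + τ • B) + D * A⁻¹ * Dᵀ).PosDef :=
    (hC.add hτB).add_posSemidef hDAD
  -- M is invertible
  have hMdet : IsUnit M.det := by
    rw [hM, det_fromBlocks_zero₂₁]
    exact (mul_pos hA.det_pos hS.det_pos).ne'.isUnit
  have hMM : M * M⁻¹ = 1 := mul_nonsing_inv M hMdet
  have hMM' : M⁻¹ * M = 1 := nonsing_inv_mul M hMdet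
  -- key factorization: N = K * M with K = fromBlocks 0 0 (-(D * A⁻¹)) 0
  set K : Matrix (Fin nu ⊕ Fin np) (Fin nu ⊕ Fin np) ℝ :=
    fromBlocks 0 0 (-(D * A⁻¹)) 0 with hK
  have hAinv : A⁻¹ * A = 1 := nonsing_inv_mul A hA.det_pos.ne'.isUnit
  have hKM : K * M = N := by
    rw [hK, hM, hN, fromBlocks_multiply]
    congr 1 <;> simp [Matrix.mul_assoc, hAinv, Matrix.neg_mul, Matrix.mul_neg]
  have hNMinv : N * M⁻¹ = K := by
    rw [← hKM, Matrix.mul_assoc, hMM, Matrix.mul_one]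
  have hKN : K * N = 0 := by
    rw [hK, hN, fromBlocks_multiply]
    simp
  have h1 : N * M⁻¹ * N = 0 := by rw [hNMinv, hKN]
  have h2 : (M⁻¹ * N) ^ 2 = 0 := by
    rw [pow_two, Matrix.mul_assoc, ← Matrix.mul_assoc N, h1, Matrix.mul_zero]
  refine ⟨h1, h2, fun b x hx => ?_⟩
  -- right inverse of M - N
  have hinv : (M - N)⁻¹ = M⁻¹ * N * M⁻¹ + M⁻¹ := by
    apply inv_eq_right_inv
    rw [Matrix.sub_mul, Matrix.mul_add, Matrix.mul_add, ← Matrix.mul_assoc,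
      ← Matrix.mul_assoc, hMM, Matrix.one_mul, ← Matrix.mul_assoc, ← Matrix.mul_assoc, h1,
      Matrix.zero_mul]
    abel
  have hx1 := hx 0
  have hx2 := hx 1
  rw [hx2, hx1]
  have e : ∀ v w : Fin nu ⊕ Fin np → ℝ,
      M⁻¹.mulVec (N.mulVec (M⁻¹.mulVec (N.mulVec v + w)) + w)
        = ((M⁻¹ * N) ^ 2).mulVec v + (M⁻¹ * N * M⁻¹).mulVec w + M⁻¹.mulVec w := by
    intro v w
    simp only [mulVec_add, mulVec_mulVec, pow_two]
    simp [Matrix.mul_assoc, mulVec_add, add_assoc]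
  rw [e, h2, hinv, add_mulVec]
  simp
end

section
/- The block matrix [[A, −Dᵀ],[D, C_τ]] of size (n_u+n_p)×(n_u+n_p) is invertible. -/
open Matrix

theorem stmt_13 {nu np : ℕ} (hnu : 0 < nu) (hnp : 0 < np)
    (A : Matrix (Fin nu) (Fin nu) ℝ)
    (B C : Matrix (Fin np) (Fin np) ℝ)
    (D : Matrix (Fin np) (Fin nu) ℝ) (τ : ℝ) (hτ : 0 < τ)
    (hA : A.PosDef) (hB : B.PosDef) (hC : C.PosDef) :
    IsUnit (fromBlocks A (-Dᵀ) D (C + τ • B)) := by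
  have hτB : (τ • B).PosDef := by
    refine ⟨?_, fun x hx => ?_⟩
    · unfold Matrix.IsHermitian
      rw [conjTranspose_smul, hB.1.eq]
      simp
    · have := mul_pos hτ (hB.2 hx)
      simp only [Finsupp.sum, Finset.mul_sum, Matrix.smul_apply, smul_eq_mul] at this ⊢
      convert this using 3 with i _ j _
      ring
  have hCτ : (C + τ • B).PosDef := hC.add_posSemidef hτB.posSemidef
  haveI : Invertible A := hA.isUnit.invertible
  have hAinv : (A⁻¹).PosDef := hA.inv
  have hSchur : ((C + τ • B) - D * ⅟A * (-Dᵀ)).PosDef := by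
    have h1 : (D * A⁻¹ * Dᵀ).PosSemidef := by
      have := hAinv.posSemidef.mul_mul_conjTranspose_same D
      simpa using this
    have : (C + τ • B) - D * ⅟A * (-Dᵀ) = (C + τ • B) + D * A⁻¹ * Dᵀ := by
      rw [invOf_eq_nonsing_inv]
      simp [sub_eq_add_neg, Matrix.mul_neg]
    rw [this]
    exact hCτ.add_posSemidef h1
  haveI : Invertible ((C + τ • B) - D * ⅟A * (-Dᵀ)) := hSchur.isUnit.invertible
  haveI := fromBlocks₁₁Invertible A (-Dᵀ) D (C + τ • B)
  exact isUnit_of_invertible _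
end
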